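/- arXiv:1901.09000 — 2 statements merged into one kernel-verified Lean document; each statement's English description precedes it below -/
import Mathlib

section
/- Let g : ℝ≥0 → ℝ≥0 be a non-increasing function with limit g_∞ = lim_{s→∞} g(s). Then for every r ∈ ℝ, the averaged integral (1/Vol B(R)) ∫_{x ∈ B(R)} g((d⁺_R(x) − r)⁺) dx converges to g_∞ as R → ∞, where d⁺_R(x) := 2R − d⁻_R(x) and d⁻_R(x) is the distance from x to ∂B(R). -/
open MeasureTheory Filter Topology

/-- The cube `[-R,R]^d` in Euclidean space. -/
def cube (d : ℕ) (R : ℝ) : Set (EuclideanSpace ℝ (Fin d)) := {x | ∀ i, |x i| ≤ R}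

lemma cube_isClosed (d : ℕ) (R : ℝ) : IsClosed (cube d R) := by
  have h : cube d R = ⋂ i, {x : EuclideanSpace ℝ (Fin d) | |x i| ≤ R} := by
    ext x; simp [cube, Set.mem_iInter]
  rw [h]
  exact isClosed_iInter fun i =>
    isClosed_le (continuous_abs.comp (EuclideanSpace.proj (𝕜 := ℝ) i).continuous) continuous_const

lemma cube_volume (d : ℕ) (R : ℝ) (hR : 0 ≤ R) :
    volume (cube d R) = ENNReal.ofReal (2*R) ^ d := by
  have hmp := EuclideanSpace.volume_preserving_symm_measurableEquiv_toLp (Fin d)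
  have hpre : (MeasurableEquiv.toLp 2 (Fin d → ℝ)).symm ⁻¹'
      (Set.univ.pi fun _ : Fin d => Set.Icc (-R) R) = cube d R := by
    ext x
    simp [cube, Set.mem_pi, abs_le, Pi.le_def, forall_and]
  rw [← hpre, hmp.measure_preimage (by measurability)]
  rw [volume_pi_pi]
  simp [Real.volume_Icc, two_mul]

lemma mem_frontier_cube {d : ℕ} {R : ℝ} {w : EuclideanSpace ℝ (Fin d)}
    (hw : w ∈ cube d R) (i : Fin d) (hwi : |w i| = R) : w ∈ frontier (cube d R) := by
  constructor
  · rw [(cube_isClosed d R).closure_eq]; exact hw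
  · intro hint
    rw [mem_interior_iff_mem_nhds, Metric.mem_nhds_iff] at hint
    obtain ⟨ε, hε, hball⟩ := hint
    set s : ℝ := if 0 ≤ w i then ε/2 else -(ε/2) with hs
    have hsabs : |s| = ε/2 := by
      have h2 : (0:ℝ) ≤ ε/2 := by positivity
      rw [hs]; split
      · exact abs_of_nonneg h2
      · rw [abs_neg]; exact abs_of_nonneg h2
    set z : EuclideanSpace ℝ (Fin d) := w + s • EuclideanSpace.single i (1:ℝ) with hz
    have hdist : dist z w = ε/2 := by
      rw [dist_eq_norm]
      simp [hz, norm_smul, EuclideanSpace.norm_single, Real.norm_eq_abs, hsabs]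
    have hzmem : z ∈ cube d R := hball (by simp [Metric.mem_ball, hdist]; linarith)
    have hzi : z i = w i + s := by
      simp [hz, EuclideanSpace.single_apply]
    have : |z i| > R := by
      rw [hzi, hs]
      rcases le_or_gt 0 (w i) with h | h
      · rw [if_pos h, abs_of_nonneg (by linarith)]
        have : w i = R := by rw [← hwi, abs_of_nonneg h]
        linarith
      · rw [if_neg (not_le.mpr h), abs_of_nonpos (by linarith)]
        have : w i = -R := by
          have := abs_of_neg h; linarith [hwi.symm.trans (abs_of_neg h)]
        linarith
    exact absurd (hzmem i) (not_le.mpr this)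

lemma infDist_le_cube {d : ℕ} (hd : 1 ≤ d) {R : ℝ} (hR : 0 ≤ R)
    {x : EuclideanSpace ℝ (Fin d)} (hx : x ∈ cube d R) :
    Metric.infDist x (frontier (cube d R)) ≤ R := by
  set i : Fin d := ⟨0, hd⟩
  have hxi := hx i
  rw [abs_le] at hxi
  set s : ℝ := if 0 ≤ x i then R - x i else -R - x i with hs
  set y : EuclideanSpace ℝ (Fin d) := x + s • EuclideanSpace.single i (1:ℝ) with hy
  have hyj : ∀ j, y j = if j = i then x i + s else x j := by
    intro j
    by_cases h : j = i
    · subst h; simp [hy, EuclideanSpace.single_apply]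
    · simp [hy, EuclideanSpace.single_apply, h]
  have hyi : |y i| = R := by
    rw [hyj i, if_pos rfl, hs]
    split <;> simp [abs_of_nonneg hR, abs_of_nonpos (neg_nonpos.mpr hR)] <;> ring_nf <;>
      simp [abs_of_nonneg hR, abs_of_nonpos (neg_nonpos.mpr hR)]
  have hymem : y ∈ cube d R := by
    intro j
    rw [hyj j]
    split
    · rw [show x i + s = y i by rw [hyj i, if_pos rfl], hyi]
    · exact hx j
  have hfront := mem_frontier_cube hymem i hyi
  have hdist : dist x y = |s| := by
    rw [dist_eq_norm]
    simp [hy, norm_smul, EuclideanSpace.norm_single, Real.norm_eq_abs]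
  calc Metric.infDist x (frontier (cube d R)) ≤ dist x y := Metric.infDist_le_dist_of_mem hfront
    _ ≤ R := by
        rw [hdist, hs]
        rcases le_or_gt 0 (x i) with h | h
        · rw [if_pos h, abs_of_nonneg (by linarith [hxi.2])]; linarith [hxi.2]
        · rw [if_neg (not_le.mpr h), abs_of_nonpos (by linarith [hxi.1])]; linarith [hxi.1]

/-- Lemma: for a non-increasing `g : [0,∞) → [0,∞)` with limit `g∞` at infinity,
the average over `B(R) = [-R,R]^d` of `g((d⁺_R(x) - r)⁺)` converges to `g∞`,
where `d⁺_R(x) = 2R - d⁻_R(x)` and `d⁻_R(x)` is the distance from `x` to `∂B(R)`. -/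
theorem mean_conservation_stmt1 (d : ℕ) (hd : 1 ≤ d)
    (g : ℝ → ℝ) (hg0 : ∀ s, 0 ≤ s → 0 ≤ g s) (hanti : AntitoneOn g (Set.Ici 0))
    (ginf : ℝ) (hlim : Tendsto g atTop (𝓝 ginf)) (r : ℝ) :
    Tendsto (fun R : ℝ =>
        (∫ x in cube d R,
          g (max ((2 * R - Metric.infDist x (frontier (cube d R))) - r) 0)) / (2 * R) ^ d)
      atTop (𝓝 ginf) := by
  have hub : ∀ s : ℝ, 0 ≤ s → ginf ≤ g s := by
    intro s hs
    refine le_of_tendsto hlim ?_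
    filter_upwards [eventually_ge_atTop s] with t ht
    exact hanti (Set.mem_Ici.mpr hs) (Set.mem_Ici.mpr (hs.trans ht)) ht
  rw [Metric.tendsto_atTop]
  intro ε hε
  obtain ⟨S, hS⟩ := Metric.tendsto_atTop.mp hlim (ε/2) (by positivity)
  refine ⟨max (max S 0 + r) 1, fun R hR => ?_⟩
  set S' := max S 0 with hS'
  have hR1 : (1:ℝ) ≤ R := le_trans (le_max_right _ _) hR
  have hR0 : (0:ℝ) < R := lt_of_lt_of_le one_pos hR1
  have hRS : S' + r ≤ R := le_trans (le_max_left _ _) hR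
  have hbound : ∀ x ∈ cube d R,
      ginf ≤ g (max ((2*R - Metric.infDist x (frontier (cube d R))) - r) 0) ∧
      g (max ((2*R - Metric.infDist x (frontier (cube d R))) - r) 0) ≤ ginf + ε/2 := by
    intro x hx
    set a := max ((2*R - Metric.infDist x (frontier (cube d R))) - r) 0 with ha
    have hinf := infDist_le_cube hd hR0.le hx
    have haS : S' ≤ a := by
      have h1 : S' ≤ 2*R - Metric.infDist x (frontier (cube d R)) - r := by linarith
      exact le_trans h1 (le_max_left _ _)
    refine ⟨hub a (le_max_right _ _), ?_⟩
    have h2 := hS a (le_trans (le_max_left S 0) haS)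
    rw [Real.dist_eq] at h2
    have h3 := abs_lt.mp h2
    linarith [h3.2]
  have hmeasset : MeasurableSet (cube d R) := (cube_isClosed d R).measurableSet
  have hvol : volume (cube d R) = ENNReal.ofReal (2*R) ^ d := cube_volume d R hR0.le
  have hvollt : volume (cube d R) < ⊤ := by
    rw [hvol]; exact ENNReal.pow_lt_top ENNReal.ofReal_lt_top
  have hvtoReal : (volume (cube d R)).toReal = (2*R)^d := by
    rw [hvol, ENNReal.toReal_pow, ENNReal.toReal_ofReal (by linarith)]
  have hφanti : Antitone (fun t : ℝ => g (max t 0)) := fun a b h =>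
    hanti (Set.mem_Ici.mpr (le_max_right _ _)) (Set.mem_Ici.mpr (le_max_right _ _))
      (max_le_max h le_rfl)
  have hmeas : Measurable (fun x : EuclideanSpace ℝ (Fin d) =>
      g (max ((2*R - Metric.infDist x (frontier (cube d R))) - r) 0)) := by
    exact hφanti.measurable.comp
      (((continuous_const.sub (Metric.continuous_infDist_pt _)).sub continuous_const)).measurable
  have hf_int : IntegrableOn (fun x => g (max ((2*R - Metric.infDist x (frontier (cube d R))) - r) 0)) (cube d R) := by
    refine Integrable.mono' (g := fun _ => g 0)
      (integrableOn_const hvollt.ne) hmeas.aestronglyMeasurable ?_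
    filter_upwards with x
    rw [Real.norm_eq_abs, abs_of_nonneg (hg0 _ (le_max_right _ _))]
    exact hanti (Set.mem_Ici.mpr le_rfl) (Set.mem_Ici.mpr (le_max_right _ _)) (le_max_right _ _)
  have hle1 : ginf * (2*R)^d ≤ ∫ x in cube d R, g (max ((2*R - Metric.infDist x (frontier (cube d R))) - r) 0) := by
    have h := setIntegral_mono_on (integrableOn_const hvollt.ne) hf_int hmeasset
      (fun x hx => (hbound x hx).1)
    rw [setIntegral_const, smul_eq_mul, measureReal_def, hvtoReal] at h
    linarith [h, mul_comm ginf ((2*R)^d)]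
  have hle2 : (∫ x in cube d R, g (max ((2*R - Metric.infDist x (frontier (cube d R))) - r) 0)) ≤ (ginf + ε/2) * (2*R)^d := by
    have h := setIntegral_mono_on hf_int (integrableOn_const hvollt.ne) hmeasset
      (fun x hx => (hbound x hx).2)
    rw [setIntegral_const, smul_eq_mul, measureReal_def, hvtoReal] at h
    linarith [h, mul_comm (ginf + ε/2) ((2*R)^d)]
  have hpow : (0:ℝ) < (2*R)^d := by positivity
  rw [Real.dist_eq]
  have h1 : ginf ≤ (∫ x in cube d R, g (max ((2*R - Metric.infDist x (frontier (cube d R))) - r) 0)) / (2*R)^d :=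
    (le_div_iff₀ hpow).mpr hle1
  have h2 : (∫ x in cube d R, g (max ((2*R - Metric.infDist x (frontier (cube d R))) - r) 0)) / (2*R)^d ≤ ginf + ε/2 :=
    (div_le_iff₀ hpow).mpr hle2
  have habs : |(∫ x in cube d R, g (max ((2*R - Metric.infDist x (frontier (cube d R))) - r) 0)) / (2*R)^d - ginf| ≤ ε/2 :=
    abs_le.mpr ⟨by linarith, by linarith⟩
  calc _ ≤ ε/2 := habs
    _ < ε := by linarith
end

section
/- There exists a constant c > 0 depending only on d such that for every R > 1, every closed subset S ⊆ [−R,R]^d, and every ε > 0, the number of connected components of [−R,R]^d \ S whose Lebesgue volume is at least ε is bounded above by K(S)·(ε^{−1} + 1) + c·R^{d−1}, where K(S) is the number of lattice cubes [0,1]^d + k (k ∈ ℤ^d) intersecting S. -/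
open MeasureTheory

/-- The unit lattice cube `[0,1]^d + k`. -/
def latticeCube (d : ℕ) (k : Fin d → ℤ) : Set (EuclideanSpace ℝ (Fin d)) :=
  {x | ∀ i, (k i : ℝ) ≤ x i ∧ x i ≤ (k i : ℝ) + 1}

/-- The number of unit lattice cubes met by `S`. -/
noncomputable def latticeCount (d : ℕ) (S : Set (EuclideanSpace ℝ (Fin d))) : ℕ :=
  Set.ncard {k : Fin d → ℤ | (S ∩ latticeCube d k).Nonempty}

section Aux
variable {d : ℕ}

lemma mem_cube {R : ℝ} {x : EuclideanSpace ℝ (Fin d)} : x ∈ cube d R ↔ ∀ i, |x i| ≤ R := Iff.rfl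

lemma mem_latticeCube {k : Fin d → ℤ} {x : EuclideanSpace ℝ (Fin d)} :
    x ∈ latticeCube d k ↔ ∀ i, (k i : ℝ) ≤ x i ∧ x i ≤ (k i : ℝ) + 1 := Iff.rfl

lemma euclid_combo_apply (a b : ℝ) (x y : EuclideanSpace ℝ (Fin d)) (i : Fin d) :
    (a • x + b • y) i = a * x i + b * y i := rfl

lemma convex_cube (R : ℝ) : Convex ℝ (cube d R) := by
  intro x hx y hy a b ha hb hab
  intro i
  show |(a • x + b • y) i| ≤ R
  rw [euclid_combo_apply]
  calc |a * x i + b * y i| ≤ |a * x i| + |b * y i| := abs_add_le _ _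
    _ = a * |x i| + b * |y i| := by
        rw [abs_mul, abs_mul, abs_of_nonneg ha, abs_of_nonneg hb]
    _ ≤ a * R + b * R := by
        have := hx i; have := hy i
        gcongr
    _ = R := by rw [← add_mul, hab, one_mul]

lemma convex_latticeCube (k : Fin d → ℤ) : Convex ℝ (latticeCube d k) := by
  intro x hx y hy a b ha hb hab
  intro i
  have h := euclid_combo_apply a b x y i
  constructor
  · rw [h]
    calc ((k i : ℝ)) = a * k i + b * k i := by rw [← add_mul, hab, one_mul]
      _ ≤ a * x i + b * y i := by
          have := (hx i).1; have := (hy i).1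
          gcongr
  · rw [h]
    calc a * x i + b * y i ≤ a * ((k i : ℝ) + 1) + b * ((k i : ℝ) + 1) := by
          have := (hx i).2; have := (hy i).2
          gcongr
      _ = (k i : ℝ) + 1 := by rw [← add_mul, hab, one_mul]

lemma isClosed_cube (R : ℝ) : IsClosed (cube d R) := by
  have : cube d R = ⋂ i, (EuclideanSpace.proj (𝕜 := ℝ) i) ⁻¹' (Set.Icc (-R) R) := by
    ext x
    simp [cube, abs_le, Set.mem_Icc]
  rw [this]
  exact isClosed_iInter fun i => isClosed_Icc.preimage (EuclideanSpace.proj i).continuous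

lemma measurableSet_connectedComponentIn {F : Set (EuclideanSpace ℝ (Fin d))}
    (hF : MeasurableSet F) (x : EuclideanSpace ℝ (Fin d)) :
    MeasurableSet (connectedComponentIn F x) := by
  by_cases hx : x ∈ F
  · have hsub : F ∩ closure (connectedComponentIn F x) ⊆ connectedComponentIn F x := by
      have hpc : IsPreconnected (F ∩ closure (connectedComponentIn F x)) := by
        apply isPreconnected_connectedComponentIn.subset_closure
        · exact Set.subset_inter (connectedComponentIn_subset F x) subset_closure
        · exact Set.inter_subset_right
      exact hpc.subset_connectedComponentIn
        ⟨hx, subset_closure (mem_connectedComponentIn hx)⟩ Set.inter_subset_left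
    have heq : connectedComponentIn F x = F ∩ closure (connectedComponentIn F x) :=
      Set.Subset.antisymm
        (Set.subset_inter (connectedComponentIn_subset F x) subset_closure) hsub
    rw [heq]
    exact hF.inter isClosed_closure.measurableSet
  · rw [connectedComponentIn_eq_empty hx]
    exact MeasurableSet.empty

lemma volume_latticeCube (k : Fin d → ℤ) : volume (latticeCube d k) = 1 := by
  have hmp := EuclideanSpace.volume_preserving_symm_measurableEquiv_toLp (Fin d)
  have heq : latticeCube d k = (MeasurableEquiv.toLp 2 (Fin d → ℝ)).symm ⁻¹'
      (Set.Icc (fun i => (k i : ℝ)) (fun i => (k i : ℝ) + 1)) := by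
    ext x
    simp only [latticeCube, Set.mem_setOf_eq, Set.mem_preimage, Set.mem_Icc, Pi.le_def]
    constructor
    · exact fun h => ⟨fun i => (h i).1, fun i => (h i).2⟩
    · exact fun h i => ⟨h.1 i, h.2 i⟩
  rw [heq, hmp.measure_preimage measurableSet_Icc.nullMeasurableSet]
  rw [Real.volume_Icc_pi]
  simp

lemma latticeCube_nonempty (k : Fin d → ℤ) : (latticeCube d k).Nonempty :=
  ⟨(WithLp.toLp 2 (fun i => (k i : ℝ)) : EuclideanSpace ℝ (Fin d)), fun i => ⟨le_refl _, by simp⟩⟩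

end Aux

/-- There is `c > 0` (depending only on `d`) such that for all `R > 1`, closed
`S ⊆ [-R,R]^d` and `ε > 0`, the number of connected components of `[-R,R]^d \ S`
of volume at least `ε` is at most `K(S)·(ε⁻¹ + 1) + c·R^{d-1}`. -/
theorem components_volume_bound (d : ℕ) (hd : 1 ≤ d) :
    ∃ c > 0, ∀ R : ℝ, 1 < R →
      ∀ S : Set (EuclideanSpace ℝ (Fin d)), IsClosed S → S ⊆ cube d R →
      ∀ ε : ℝ, 0 < ε →
      (Set.ncard {C : Set (EuclideanSpace ℝ (Fin d)) |
          (∃ x ∈ cube d R \ S, C = connectedComponentIn (cube d R \ S) x) ∧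
          ε ≤ (volume C).toReal} : ℝ)
        ≤ (latticeCount d S : ℝ) * (ε⁻¹ + 1) + c * R ^ (d - 1) := by
  classical
  have hd0 : (0:ℝ) < d := by exact_mod_cast Nat.lt_of_lt_of_le Nat.zero_lt_one hd
  refine ⟨2 * d * 4 ^ (d - 1), by positivity, ?_⟩
  intro R hR S hS hSsub ε hε
  set F : Set (EuclideanSpace ℝ (Fin d)) := cube d R \ S with hFdef
  set 𝒞 : Set (Set (EuclideanSpace ℝ (Fin d))) :=
    {C | (∃ x ∈ F, C = connectedComponentIn F x) ∧ ε ≤ (volume C).toReal} with h𝒞def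
  -- basic component facts
  have hFsubcube : F ⊆ cube d R := Set.diff_subset
  have hCsub : ∀ C ∈ 𝒞, C ⊆ F := by
    rintro C ⟨⟨x, hx, rfl⟩, -⟩
    exact connectedComponentIn_subset F x
  have hOwn : ∀ C ∈ 𝒞, ∀ T : Set (EuclideanSpace ℝ (Fin d)),
      Convex ℝ T → T ⊆ F → (T ∩ C).Nonempty → T ⊆ C := by
    rintro C ⟨⟨x, hx, rfl⟩, -⟩ T hTc hTF ⟨y, hyT, hyC⟩
    rw [connectedComponentIn_eq hyC]
    exact hTc.isPreconnected.subset_connectedComponentIn hyT hTF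
  have hEqD : ∀ C ∈ 𝒞, ∀ C' ∈ 𝒞, (C ∩ C').Nonempty → C = C' := by
    rintro C ⟨⟨x, hx, rfl⟩, -⟩ C' ⟨⟨x', hx', rfl⟩, -⟩ ⟨z, hz, hz'⟩
    rw [connectedComponentIn_eq hz, ← connectedComponentIn_eq hz']
  have hCmeas : ∀ C ∈ 𝒞, MeasurableSet C := by
    rintro C ⟨⟨x, hx, rfl⟩, -⟩
    exact measurableSet_connectedComponentIn
      (((isClosed_cube R).measurableSet).diff hS.measurableSet) x
  -- cell infrastructure
  set m : ℤ := ⌊R⌋ with hmdef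
  have hmR : (m : ℝ) ≤ R := Int.floor_le R
  have hm1 : 1 ≤ m := by
    rw [hmdef]; exact Int.le_floor.2 (by exact_mod_cast hR.le)
  have hbounds : ∀ k : Fin d → ℤ, (latticeCube d k ∩ cube d R).Nonempty →
      ∀ i, -m - 1 ≤ k i ∧ k i ≤ m := by
    rintro k ⟨x, hxQ, hxc⟩ i
    obtain ⟨h1, h2⟩ := hxQ i
    have h3 : |x i| ≤ R := hxc i
    rw [abs_le] at h3
    constructor
    · have h5 : -(k i) - 1 ≤ m := Int.le_floor.2 (by push_cast; linarith)
      linarith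
    · exact Int.le_floor.2 (by push_cast; linarith)
  have hbad : ∀ k : Fin d → ℤ, (latticeCube d k ∩ cube d R).Nonempty →
      ¬ latticeCube d k ⊆ cube d R → ∃ i, k i = m ∨ k i = -m - 1 := by
    intro k hne hk
    rw [Set.not_subset] at hk
    obtain ⟨x, hxQ, hxc⟩ := hk
    rw [mem_cube] at hxc; push_neg at hxc
    obtain ⟨i, hi⟩ := hxc
    obtain ⟨h1, h2⟩ := hxQ i
    obtain ⟨hlo, hhi⟩ := hbounds k hne i
    rw [lt_abs] at hi
    refine ⟨i, ?_⟩
    rcases hi with hi | hi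
    · left
      have : (m : ℝ) < (k i : ℝ) + 1 := lt_of_le_of_lt hmR (lt_of_lt_of_le hi h2)
      have : m < k i + 1 := by exact_mod_cast this
      omega
    · right
      have hxi : x i < -R := by linarith
      have : (k i : ℝ) < -(m:ℝ) := by
        have : (k i : ℝ) < -R := lt_of_le_of_lt h1 hxi
        linarith
      have : k i < -m := by exact_mod_cast this
      omega
  set n : ℕ := (2 * m + 2).toNat with hndef
  set box : Finset (Fin d → ℤ) := Fintype.piFinset (fun _ => Finset.Icc (-m - 1) m) with hboxdef
  have hmembox : ∀ k : Fin d → ℤ, (∀ i, -m - 1 ≤ k i ∧ k i ≤ m) → k ∈ box := by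
    intro k hk
    rw [hboxdef, Fintype.mem_piFinset]
    intro i; rw [Finset.mem_Icc]; exact ⟨(hk i).1, (hk i).2⟩
  set SC : Set (Fin d → ℤ) := {k | (S ∩ latticeCube d k).Nonempty} with hSCdef
  have hSCfin : SC.Finite := by
    apply box.finite_toSet.subset
    rintro k ⟨y, hyS, hyQ⟩
    exact hmembox k (hbounds k ⟨y, hyQ, hSsub hyS⟩)
  have hQmeetscube : ∀ C ∈ 𝒞, ∀ k : Fin d → ℤ, (latticeCube d k ∩ C).Nonempty →
      (latticeCube d k ∩ cube d R).Nonempty := by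
    rintro C hC k ⟨y, hyQ, hyC⟩
    exact ⟨y, hyQ, hFsubcube (hCsub C hC hyC)⟩
  -- the three classes
  set C2 : Set (Set (EuclideanSpace ℝ (Fin d))) := {C ∈ 𝒞 | ∃ k, S ∩ latticeCube d k = ∅ ∧
      (latticeCube d k ∩ C).Nonempty ∧ ¬ latticeCube d k ⊆ cube d R} with hC2def
  set C3 : Set (Set (EuclideanSpace ℝ (Fin d))) := {C ∈ 𝒞 | C ∉ C2 ∧
      ∃ k, S ∩ latticeCube d k = ∅ ∧
      (latticeCube d k ∩ C).Nonempty ∧ latticeCube d k ⊆ cube d R} with hC3def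
  set C1 : Set (Set (EuclideanSpace ℝ (Fin d))) := {C ∈ 𝒞 | ∀ k, S ∩ latticeCube d k = ∅ →
      latticeCube d k ∩ C = ∅} with hC1def
  have hcover : 𝒞 ⊆ C1 ∪ C2 ∪ C3 := by
    intro C hC
    by_cases h2 : C ∈ C2
    · exact Or.inl (Or.inr h2)
    by_cases h3 : ∃ k, S ∩ latticeCube d k = ∅ ∧ (latticeCube d k ∩ C).Nonempty
    · obtain ⟨k, hk1, hk2⟩ := h3
      by_cases hsub : latticeCube d k ⊆ cube d R
      · exact Or.inr ⟨hC, h2, k, hk1, hk2, hsub⟩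
      · exact absurd ⟨hC, k, hk1, hk2, hsub⟩ h2
    · push_neg at h3
      exact Or.inl (Or.inl ⟨hC, h3⟩)
  -- class 2: boundary cells
  set Bi : Fin d → Finset (Fin d → ℤ) := fun i =>
    Fintype.piFinset (fun j => if j = i then ({m, -m - 1} : Finset ℤ) else Finset.Icc (-m - 1) m)
    with hBidef
  set B2 : Finset (Fin d → ℤ) := Finset.univ.biUnion Bi with hB2def
  set f2 : Set (EuclideanSpace ℝ (Fin d)) → (Fin d → ℤ) := fun C =>
    if h : ∃ k, S ∩ latticeCube d k = ∅ ∧ (latticeCube d k ∩ C).Nonempty ∧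
        ¬ latticeCube d k ⊆ cube d R then h.choose else 0 with hf2def
  have hf2spec : ∀ C ∈ C2, S ∩ latticeCube d (f2 C) = ∅ ∧
      (latticeCube d (f2 C) ∩ C).Nonempty ∧ ¬ latticeCube d (f2 C) ⊆ cube d R := by
    rintro C ⟨-, hex⟩
    simp only [hf2def, dif_pos hex]
    exact hex.choose_spec
  have hf2maps : ∀ C ∈ C2, f2 C ∈ (B2 : Set (Fin d → ℤ)) := by
    intro C hC
    obtain ⟨hk1, hk2, hk3⟩ := hf2spec C hC
    have hnc : (latticeCube d (f2 C) ∩ cube d R).Nonempty := hQmeetscube C hC.1 _ hk2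
    obtain ⟨i, hi⟩ := hbad (f2 C) hnc hk3
    have hbnd := hbounds (f2 C) hnc
    rw [hB2def]
    rw [Finset.mem_coe, Finset.mem_biUnion]
    refine ⟨i, Finset.mem_univ i, ?_⟩
    rw [hBidef]
    rw [Fintype.mem_piFinset]
    intro j
    by_cases hji : j = i
    · rw [if_pos hji, Finset.mem_insert, Finset.mem_singleton]
      subst hji
      exact hi
    · rw [if_neg hji, Finset.mem_Icc]
      exact ⟨(hbnd j).1, (hbnd j).2⟩
  have hf2inj : Set.InjOn f2 C2 := by
    intro C hC C' hC' heq
    obtain ⟨hk1, hk2, hk3⟩ := hf2spec C hC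
    obtain ⟨hk1', hk2', hk3'⟩ := hf2spec C' hC'
    rw [← heq] at hk2'
    set T : Set (EuclideanSpace ℝ (Fin d)) := latticeCube d (f2 C) ∩ cube d R with hTdef
    have hTconv : Convex ℝ T := (convex_latticeCube _).inter (convex_cube R)
    have hTF : T ⊆ F := by
      rintro x ⟨hxQ, hxc⟩
      refine ⟨hxc, fun hxS => ?_⟩
      exact Set.eq_empty_iff_forall_notMem.1 hk1 x ⟨hxS, hxQ⟩
    have hTC : T ⊆ C := by
      apply hOwn C hC.1 T hTconv hTF
      obtain ⟨y, hyQ, hyC⟩ := hk2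
      exact ⟨y, ⟨hyQ, hFsubcube (hCsub C hC.1 hyC)⟩, hyC⟩
    have hTC' : T ⊆ C' := by
      apply hOwn C' hC'.1 T hTconv hTF
      obtain ⟨y, hyQ, hyC⟩ := hk2'
      exact ⟨y, ⟨hyQ, hFsubcube (hCsub C' hC'.1 hyC)⟩, hyC⟩
    have hTne : T.Nonempty := hQmeetscube C hC.1 _ hk2
    obtain ⟨z, hz⟩ := hTne
    exact hEqD C hC.1 C' hC'.1 ⟨z, hTC hz, hTC' hz⟩
  have h2card : C2.ncard ≤ B2.card := by
    have := Set.ncard_le_ncard_of_injOn f2 hf2maps hf2inj B2.finite_toSet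
    simpa using this
  have h2fin : C2.Finite := by
    apply Set.Finite.of_finite_image ?_ hf2inj
    apply B2.finite_toSet.subset
    rintro _ ⟨C, hC, rfl⟩
    exact hf2maps C hC
  have hIccCard : (Finset.Icc (-m - 1) m).card = n := by
    rw [Int.card_Icc, hndef]
    congr 1; ring
  have hBicard : ∀ i, (Bi i).card = 2 * n ^ (d - 1) := by
    intro i
    rw [hBidef]
    rw [Fintype.card_piFinset]
    rw [← Finset.mul_prod_erase Finset.univ _ (Finset.mem_univ i)]
    rw [if_pos rfl]
    have hpair : ({m, -m - 1} : Finset ℤ).card = 2 := by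
      rw [Finset.card_insert_of_notMem (by simp; omega), Finset.card_singleton]
    rw [hpair]
    congr 1
    rw [Finset.prod_congr rfl (fun j hj => ?_)]
    · rw [Finset.prod_const, Finset.card_erase_of_mem (Finset.mem_univ i), Finset.card_univ,
        Fintype.card_fin]
    · rw [if_neg (Finset.ne_of_mem_erase hj), hIccCard]
  have hB2card : B2.card ≤ d * (2 * n ^ (d - 1)) := by
    calc B2.card ≤ ∑ i, (Bi i).card := Finset.card_biUnion_le
      _ = ∑ _i : Fin d, 2 * n ^ (d - 1) := Finset.sum_congr rfl (fun i _ => hBicard i)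
      _ = d * (2 * n ^ (d - 1)) := by
          rw [Finset.sum_const, Finset.card_univ, Fintype.card_fin, smul_eq_mul]
  have hnR : (n : ℝ) ≤ 4 * R := by
    have h0 : (0:ℤ) ≤ 2 * m + 2 := by omega
    have hcast : ((2 * m + 2).toNat : ℤ) = 2 * m + 2 := Int.toNat_of_nonneg h0
    have : ((n : ℤ) : ℝ) = 2 * (m:ℝ) + 2 := by
      rw [hndef, hcast]; push_cast; ring
    have h2 : (n : ℝ) = 2 * (m:ℝ) + 2 := by exact_mod_cast this
    rw [h2]; linarith
  have h2R : (C2.ncard : ℝ) ≤ 2 * d * 4 ^ (d - 1) * R ^ (d - 1) := by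
    have hc1 : (C2.ncard : ℝ) ≤ (d * (2 * n ^ (d - 1)) : ℕ) := by
      exact_mod_cast le_trans h2card hB2card
    calc (C2.ncard : ℝ) ≤ (d * (2 * n ^ (d - 1)) : ℕ) := hc1
      _ = (d : ℝ) * (2 * (n:ℝ) ^ (d - 1)) := by push_cast; ring
      _ ≤ (d : ℝ) * (2 * (4 * R) ^ (d - 1)) := by
          have h4R : (0:ℝ) ≤ (n:ℝ) := Nat.cast_nonneg n
          gcongr
      _ = 2 * d * 4 ^ (d - 1) * R ^ (d - 1) := by rw [mul_pow]; ring
  -- class 3: interior owned cells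
  set O : Set (EuclideanSpace ℝ (Fin d)) → Set (Fin d → ℤ) := fun C =>
    {k | S ∩ latticeCube d k = ∅ ∧ (latticeCube d k ∩ C).Nonempty ∧
      latticeCube d k ⊆ cube d R} with hOdef
  have hOfin : ∀ C ∈ 𝒞, (O C).Finite := by
    intro C hC
    apply box.finite_toSet.subset
    intro k hk
    exact hmembox k (hbounds k (hQmeetscube C hC k hk.2.1))
  have hOsubC : ∀ C ∈ 𝒞, ∀ k ∈ O C, latticeCube d k ⊆ C := by
    intro C hC k hk
    apply hOwn C hC _ (convex_latticeCube k) ?_ hk.2.1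
    intro x hx
    exact ⟨hk.2.2 hx, fun hxS => Set.eq_empty_iff_forall_notMem.1 hk.1 x ⟨hxS, hx⟩⟩
  have hi0 : (0 : ℕ) < d := hd
  set i0 : Fin d := ⟨0, hi0⟩ with hi0def
  set f3 : Set (EuclideanSpace ℝ (Fin d)) → (Fin d → ℤ) := fun C =>
    if h : ∃ k ∈ O C, ∀ k' ∈ O C, k' i0 ≤ k i0 then
      Function.update h.choose i0 (h.choose i0 + 1) else 0 with hf3def
  have hf3spec : ∀ C ∈ C3, ∃ k ∈ O C, (∀ k' ∈ O C, k' i0 ≤ k i0) ∧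
      f3 C = Function.update k i0 (k i0 + 1) := by
    rintro C ⟨hC𝒞, -, k0, hk0⟩
    have hex : ∃ k ∈ O C, ∀ k' ∈ O C, k' i0 ≤ k i0 := by
      obtain ⟨k, hk, hmax⟩ := Set.exists_max_image (O C) (fun k => k i0) (hOfin C hC𝒞) ⟨k0, hk0⟩
      exact ⟨k, hk, hmax⟩
    refine ⟨hex.choose, hex.choose_spec.1, hex.choose_spec.2, ?_⟩
    simp only [hf3def, dif_pos hex]
  have hf3mem : ∀ C ∈ C3, f3 C ∈ SC := by
    intro C hC
    obtain ⟨k, hkO, hkmax, hfeq⟩ := hf3spec C hC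
    set j : Fin d → ℤ := Function.update k i0 (k i0 + 1) with hjdef
    rw [hfeq]
    set p : EuclideanSpace ℝ (Fin d) :=
      WithLp.toLp 2 (fun i => if i = i0 then (k i0 : ℝ) + 1 else (k i : ℝ)) with hpdef
    have hpQk : p ∈ latticeCube d k := by
      intro i
      by_cases hii : i = i0
      · subst hii
        rw [hpdef]; simp only [PiLp.toLp_apply, if_pos rfl, if_true]
        constructor <;> linarith
      · rw [hpdef]; simp only [PiLp.toLp_apply, if_neg hii]
        constructor <;> linarith
    have hpC : p ∈ C := hOsubC C hC.1 k hkO hpQk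
    have hpQj : p ∈ latticeCube d j := by
      intro i
      by_cases hii : i = i0
      · subst hii
        rw [hpdef, hjdef]
        simp only [PiLp.toLp_apply, if_pos rfl, if_true, Function.update_self]
        push_cast
        constructor <;> linarith
      · rw [hpdef, hjdef]
        simp only [PiLp.toLp_apply, if_neg hii, Function.update_of_ne hii]
        constructor <;> linarith
    by_contra hjSC
    have hempty : S ∩ latticeCube d j = ∅ := Set.not_nonempty_iff_eq_empty.1 hjSC
    have hjC : (latticeCube d j ∩ C).Nonempty := ⟨p, hpQj, hpC⟩
    by_cases hsub : latticeCube d j ⊆ cube d R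
    · have hjO : j ∈ O C := ⟨hempty, hjC, hsub⟩
      have := hkmax j hjO
      rw [hjdef, Function.update_self] at this
      omega
    · exact hC.2.1 ⟨hC.1, j, hempty, hjC, hsub⟩
  have hf3inj : Set.InjOn f3 C3 := by
    intro C hC C' hC' heq
    obtain ⟨k, hkO, hkmax, hfeq⟩ := hf3spec C hC
    obtain ⟨k', hkO', hkmax', hfeq'⟩ := hf3spec C' hC'
    rw [hfeq, hfeq'] at heq
    have hkk : k = k' := by
      funext i
      by_cases hii : i = i0
      · subst hii
        have := congrFun heq i0
        rw [Function.update_self, Function.update_self] at this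
        omega
      · have := congrFun heq i
        rwa [Function.update_of_ne hii, Function.update_of_ne hii] at this
    obtain ⟨z, hz⟩ := latticeCube_nonempty k
    exact hEqD C hC.1 C' hC'.1
      ⟨z, hOsubC C hC.1 k hkO hz, hOsubC C' hC'.1 k' hkO' (hkk ▸ hz)⟩
  have h3card : C3.ncard ≤ SC.ncard :=
    Set.ncard_le_ncard_of_injOn f3 hf3mem hf3inj hSCfin
  have h3fin : C3.Finite := by
    apply Set.Finite.of_finite_image ?_ hf3inj
    apply hSCfin.subset
    rintro _ ⟨C, hC, rfl⟩
    exact hf3mem C hC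
  -- class 1: components inside S-cells
  have hC1subU : ∀ C ∈ C1, C ⊆ ⋃ k ∈ hSCfin.toFinset, latticeCube d k := by
    rintro C ⟨hC𝒞, hprop⟩ x hxC
    have hxQ : x ∈ latticeCube d (fun i => ⌊x i⌋) :=
      fun i => ⟨Int.floor_le _, (Int.lt_floor_add_one _).le⟩
    have hkSC : (fun i => ⌊x i⌋) ∈ SC := by
      by_contra hne
      have hempty : S ∩ latticeCube d (fun i => ⌊x i⌋) = ∅ :=
        Set.not_nonempty_iff_eq_empty.1 hne
      have := hprop _ hempty
      exact Set.eq_empty_iff_forall_notMem.1 this x ⟨hxQ, hxC⟩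
    exact Set.mem_biUnion (hSCfin.mem_toFinset.2 hkSC) hxQ
  have hUvol : volume (⋃ k ∈ hSCfin.toFinset, latticeCube d k) ≤ (SC.ncard : ENNReal) := by
    calc volume (⋃ k ∈ hSCfin.toFinset, latticeCube d k)
        ≤ ∑ k ∈ hSCfin.toFinset, volume (latticeCube d k) :=
          measure_biUnion_finset_le _ _
      _ = ∑ _k ∈ hSCfin.toFinset, 1 :=
          Finset.sum_congr rfl (fun k _ => volume_latticeCube k)
      _ = (hSCfin.toFinset.card : ENNReal) := by
          rw [Finset.sum_const, nsmul_eq_mul, mul_one]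
      _ = (SC.ncard : ENNReal) := by
          rw [Set.ncard_eq_toFinset_card _ hSCfin]
  have hkey : ∀ t : Finset (Set (EuclideanSpace ℝ (Fin d))), ↑t ⊆ C1 →
      (t.card : ℝ) * ε ≤ (SC.ncard : ℝ) := by
    intro t ht
    have htsub𝒞 : ∀ C ∈ t, C ∈ 𝒞 := fun C hC => (ht hC).1
    have hdisj : (↑t : Set (Set (EuclideanSpace ℝ (Fin d)))).PairwiseDisjoint id := by
      intro C hC C' hC' hne
      by_contra hnd
      obtain ⟨z, hz, hz'⟩ := Set.not_disjoint_iff.1 hnd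
      exact hne (hEqD C (htsub𝒞 C hC) C' (htsub𝒞 C' hC') ⟨z, hz, hz'⟩)
    have hENN : (t.card : ENNReal) * ENNReal.ofReal ε ≤ (SC.ncard : ENNReal) := by
      calc (t.card : ENNReal) * ENNReal.ofReal ε
          = ∑ _C ∈ t, ENNReal.ofReal ε := by rw [Finset.sum_const, nsmul_eq_mul]
        _ ≤ ∑ C ∈ t, volume C := by
            refine Finset.sum_le_sum (fun C hC => ?_)
            have hvol : ε ≤ (volume C).toReal := (htsub𝒞 C hC).2
            by_cases htop : volume C = ⊤
            · rw [htop]; exact le_top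
            · rw [← ENNReal.ofReal_toReal htop]
              exact ENNReal.ofReal_le_ofReal hvol
        _ = volume (⋃ C ∈ t, C) :=
            (measure_biUnion_finset hdisj (fun C hC => hCmeas C (htsub𝒞 C hC))).symm
        _ ≤ volume (⋃ k ∈ hSCfin.toFinset, latticeCube d k) :=
            measure_mono (Set.iUnion₂_subset fun C hC => hC1subU C (ht hC))
        _ ≤ (SC.ncard : ENNReal) := hUvol
    have hfin : ((SC.ncard : ENNReal)) ≠ ⊤ := ENNReal.natCast_ne_top _
    have h := ENNReal.toReal_mono hfin hENN
    rwa [ENNReal.toReal_mul, ENNReal.toReal_natCast, ENNReal.toReal_natCast,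
      ENNReal.toReal_ofReal hε.le] at h
  have h1fin : C1.Finite := by
    by_contra hinf
    obtain ⟨nn, hnn⟩ := exists_nat_gt ((SC.ncard : ℝ) / ε)
    obtain ⟨t, hts, htc⟩ := Set.Infinite.exists_subset_card_eq hinf nn
    have hle := hkey t hts
    rw [htc] at hle
    have : (SC.ncard : ℝ) < nn * ε := (div_lt_iff₀ hε).1 hnn
    linarith
  have h1R : (C1.ncard : ℝ) ≤ (SC.ncard : ℝ) * ε⁻¹ := by
    have h := hkey h1fin.toFinset (by rw [Set.Finite.coe_toFinset])
    rw [← Set.ncard_eq_toFinset_card _ h1fin] at h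
    rw [← div_eq_mul_inv, le_div_iff₀ hε]
    exact h
  -- assembly
  have hle : 𝒞.ncard ≤ C1.ncard + C2.ncard + C3.ncard := by
    calc 𝒞.ncard ≤ (C1 ∪ C2 ∪ C3).ncard :=
        Set.ncard_le_ncard hcover (((h1fin.union h2fin).union h3fin))
      _ ≤ (C1 ∪ C2).ncard + C3.ncard := Set.ncard_union_le _ _
      _ ≤ C1.ncard + C2.ncard + C3.ncard :=
          Nat.add_le_add_right (Set.ncard_union_le _ _) _
  have hKSC : (latticeCount d S : ℝ) = (SC.ncard : ℝ) := by norm_cast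
  have h3R : (C3.ncard : ℝ) ≤ (SC.ncard : ℝ) := by exact_mod_cast h3card
  have hcast : (𝒞.ncard : ℝ) ≤ (C1.ncard : ℝ) + (C2.ncard : ℝ) + (C3.ncard : ℝ) := by
    exact_mod_cast hle
  rw [hKSC]
  calc (𝒞.ncard : ℝ) ≤ (C1.ncard : ℝ) + (C2.ncard : ℝ) + (C3.ncard : ℝ) := hcast
    _ ≤ ((SC.ncard : ℝ) * ε⁻¹) + (2 * d * 4 ^ (d - 1) * R ^ (d - 1)) + (SC.ncard : ℝ) := by
        exact add_le_add (add_le_add h1R h2R) h3R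
    _ = (SC.ncard : ℝ) * (ε⁻¹ + 1) + 2 * d * 4 ^ (d - 1) * R ^ (d - 1) := by ring
end
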